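/- Let d ≥ 1, let p, ρ : ℝ^d → ℝ be positive differentiable functions, and let k : ℝ^d → ℝ^d → ℝ be a kernel that is twice continuously differentiable. For a positive differentiable function r, define κ_r(x, y) = ⟨∇log r(x), ∇log r(y)⟩·k(x,y) + ⟨∇log r(x), ∇_y k(x,y)⟩ + ⟨∇log r(y), ∇_x k(x,y)⟩ + ∑_{i=1}^d ∂²k(x,y)/∂x_i ∂y_i, where ∇_x and ∇_y denote gradients in the first and second argument. Let w(x) = ρ(x)/p(x) and let κ̃_p denote the same expression computed with density p and with k replaced by the importance-weighted kernel k̃(x,y) = w(x)·w(y)·k(x,y). Then for all x, y ∈ ℝ^d, κ̃_p(x, y) = w(x)·w(y)·κ_ρ(x, y). (Key identity in the proof of Theorem 2, Appendix B.) -/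

import Mathlib

open Real InnerProductSpace
open scoped InnerProductSpace BigOperators

section helpers

variable {F : Type*} [NormedAddCommGroup F] [InnerProductSpace ℝ F] [CompleteSpace F]

lemma grad_eq (f : F → ℝ) (x : F) : gradient f x = (toDual ℝ F).symm (fderiv ℝ f x) := rfl

lemma inner_grad (f : F → ℝ) (x v : F) : ⟪gradient f x, v⟫_ℝ = fderiv ℝ f x v :=
  toDual_symm_apply

lemma gradient_mul' {f g : F → ℝ} {x : F} (hf : DifferentiableAt ℝ f x)
    (hg : DifferentiableAt ℝ g x) :
    gradient (fun z => f z * g z) x = f x • gradient g x + g x • gradient f x := by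
  simp only [grad_eq, fderiv_fun_mul hf hg, map_add, map_smul]

lemma gradient_const_mul' {g : F → ℝ} {x : F} (c : ℝ) (hg : DifferentiableAt ℝ g x) :
    gradient (fun z => c * g z) x = c • gradient g x := by
  simp only [grad_eq, fderiv_const_mul hg c, map_smul]

lemma gradient_log' {r : F → ℝ} {x : F} (hr : DifferentiableAt ℝ r x) (hx : r x ≠ 0) :
    gradient (fun z => Real.log (r z)) x = (r x)⁻¹ • gradient r x := by
  have h := (Real.hasDerivAt_log hx).comp_hasFDerivAt x hr.hasFDerivAt
  simp only [Function.comp_def] at h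
  rw [grad_eq, grad_eq, h.fderiv, map_smul]

lemma gradient_inv' {r : F → ℝ} {x : F} (hr : DifferentiableAt ℝ r x) (hx : r x ≠ 0) :
    gradient (fun z => (r z)⁻¹) x = (-(r x ^ 2)⁻¹) • gradient r x := by
  have h := (hasDerivAt_inv hx).comp_hasFDerivAt x hr.hasFDerivAt
  simp only [Function.comp_def] at h
  rw [grad_eq, grad_eq, h.fderiv, map_smul]

omit [CompleteSpace F] in
lemma trace_smulRight' [Module.Finite ℝ F] (f : F →L[ℝ] ℝ) (m : F) :
    LinearMap.trace ℝ F ((f.smulRight m : F →L[ℝ] F) : F →ₗ[ℝ] F) = f m := by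
  have h : ((f.smulRight m : F →L[ℝ] F) : F →ₗ[ℝ] F)
      = dualTensorHom ℝ F F ((f : F →ₗ[ℝ] ℝ) ⊗ₜ m) := by
    ext x; simp [dualTensorHom_apply]
  rw [h, LinearMap.trace_eq_contract_apply, contractLeft_apply]
  rfl

end helpers

/-- Trace of the mixed second derivative `∑ᵢ ∂²k(x,y)/∂xᵢ∂yᵢ` of a kernel. -/
noncomputable def mixedTrace {d : ℕ}
    (k : EuclideanSpace ℝ (Fin d) → EuclideanSpace ℝ (Fin d) → ℝ)
    (x y : EuclideanSpace ℝ (Fin d)) : ℝ :=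
  LinearMap.trace ℝ _
    ((fderiv ℝ (fun y' => gradient (fun x' => k x' y') x) y :
        EuclideanSpace ℝ (Fin d) →ₗ[ℝ] EuclideanSpace ℝ (Fin d)))

/-- The integrand `κ_r(x,y)` of the squared kernelized Stein discrepancy for a
positive differentiable density `r` and kernel `k`. -/
noncomputable def kappa {d : ℕ} (r : EuclideanSpace ℝ (Fin d) → ℝ)
    (k : EuclideanSpace ℝ (Fin d) → EuclideanSpace ℝ (Fin d) → ℝ)
    (x y : EuclideanSpace ℝ (Fin d)) : ℝ :=
  ⟪gradient (fun z => Real.log (r z)) x, gradient (fun z => Real.log (r z)) y⟫_ℝ * k x y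
  + ⟪gradient (fun z => Real.log (r z)) x, gradient (fun y' => k x y') y⟫_ℝ
  + ⟪gradient (fun z => Real.log (r z)) y, gradient (fun x' => k x' y) x⟫_ℝ
  + mixedTrace k x y

set_option maxHeartbeats 1000000 in
/-- Key identity in the proof of Theorem 2 (Appendix B):
`κ̃_p(x,y) = w(x)·w(y)·κ_ρ(x,y)` where `κ̃_p` is computed with density `p` and
the importance-weighted kernel `k̃(x,y) = w(x)w(y)k(x,y)`, `w = ρ/p`. -/
theorem gf_svgd_stmt4 (d : ℕ) (hd : 1 ≤ d)
    (p ρ : EuclideanSpace ℝ (Fin d) → ℝ)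
    (hp : ∀ y, 0 < p y) (hρ : ∀ y, 0 < ρ y)
    (hpd : Differentiable ℝ p) (hρd : Differentiable ℝ ρ)
    (k : EuclideanSpace ℝ (Fin d) → EuclideanSpace ℝ (Fin d) → ℝ)
    (hk : ContDiff ℝ 2 (fun q : EuclideanSpace ℝ (Fin d) × EuclideanSpace ℝ (Fin d) => k q.1 q.2))
    (w : EuclideanSpace ℝ (Fin d) → ℝ) (hw : w = fun y => ρ y / p y)
    (ktilde : EuclideanSpace ℝ (Fin d) → EuclideanSpace ℝ (Fin d) → ℝ)
    (hktilde : ktilde = fun x y => w x * w y * k x y) :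
    ∀ x y, kappa p ktilde x y = w x * w y * kappa ρ k x y := by
  intro x y
  have hpne : ∀ z, p z ≠ 0 := fun z => (hp z).ne'
  have hρne : ∀ z, ρ z ≠ 0 := fun z => (hρ z).ne'
  have hwd : Differentiable ℝ w := by 
    have e : w = fun t => ρ t * (p t)⁻¹ := by funext t; simp only [hw]; rw [div_eq_mul_inv]
    rw [e]; exact hρd.mul fun z => (hpd z).inv (hpne z)
  have hkd : Differentiable ℝ (fun q : EuclideanSpace ℝ (Fin d) × EuclideanSpace ℝ (Fin d) => k q.1 q.2) :=
    (hk.of_le one_le_two).differentiable one_ne_zero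
  have hk_x : ∀ y', Differentiable ℝ (fun x' => k x' y') := fun y' =>
    hkd.comp (differentiable_id.prodMk (differentiable_const y'))
  have hk_y : ∀ x', Differentiable ℝ (fun y' => k x' y') := fun x' =>
    hkd.comp ((differentiable_const x').prodMk differentiable_id)
  -- gradient of w
  have hgw : ∀ z, gradient w z = w z • ((ρ z)⁻¹ • gradient ρ z - (p z)⁻¹ • gradient p z) := by
    intro z
    have hz : w z = ρ z * (p z)⁻¹ := by simp only [hw]; rw [div_eq_mul_inv]
    have e : w = fun t => ρ t * (p t)⁻¹ := by
      funext t; simp only [hw]; rw [div_eq_mul_inv]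
    calc gradient w z = gradient (fun t => ρ t * (p t)⁻¹) z := by rw [← e]
      _ = ρ z • gradient (fun t => (p t)⁻¹) z + (p z)⁻¹ • gradient ρ z :=
          gradient_mul' (hρd z) ((hpd z).inv (hpne z))
      _ = ρ z • ((-(p z ^ 2)⁻¹) • gradient p z) + (p z)⁻¹ • gradient ρ z := by
          rw [gradient_inv' (hpd z) (hpne z)]
      _ = w z • ((ρ z)⁻¹ • gradient ρ z - (p z)⁻¹ • gradient p z) := by
          rw [hz]; match_scalars
          · field_simp [hpne z, hρne z]; try ring
          · field_simp [hpne z, hρne z]; try ring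
  -- gradients of log densities
  have hlp : ∀ z, gradient (fun t => Real.log (p t)) z = (p z)⁻¹ • gradient p z :=
    fun z => gradient_log' (hpd z) (hpne z)
  have hlρ : ∀ z, gradient (fun t => Real.log (ρ t)) z = (ρ z)⁻¹ • gradient ρ z :=
    fun z => gradient_log' (hρd z) (hρne z)
  -- term A : gradient in y of ktilde x ·
  have hA : gradient (fun y' => ktilde x y') y
      = w x • (w y • gradient (fun y' => k x y') y + k x y • gradient w y) := by
    have e : (fun y' => ktilde x y') = fun y' => w x * (w y' * k x y') := by
      funext y'; simp only [hktilde]; ring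
    rw [e, gradient_const_mul' (w x) ((hwd y).fun_mul ((hk_y x) y)),
        gradient_mul' (hwd y) ((hk_y x) y)]
  -- term B : gradient in x of ktilde · y
  have hB : gradient (fun x' => ktilde x' y) x
      = w y • (w x • gradient (fun x' => k x' y) x + k x y • gradient w x) := by
    have e : (fun x' => ktilde x' y) = fun x' => w y * (w x' * k x' y) := by
      funext x'; simp only [hktilde]; ring
    rw [e, gradient_const_mul' (w y) ((hwd x).fun_mul ((hk_x y) x)),
        gradient_mul' (hwd x) ((hk_x y) x)]
  -- differentiability of the gradient field y' ↦ ∇ₓ k(·,y') x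
  have hslice : ∀ y' : EuclideanSpace ℝ (Fin d), fderiv ℝ (fun x' => k x' y') x
      = (fderiv ℝ (fun q : EuclideanSpace ℝ (Fin d) × EuclideanSpace ℝ (Fin d) => k q.1 q.2)
          (x, y')).comp (ContinuousLinearMap.inl ℝ _ _) :=
    fun y' => by exact ((hkd (x, y')).hasFDerivAt.comp x (hasFDerivAt_prodMk_left (𝕜 := ℝ) x y')).fderiv
  have hgdiff : DifferentiableAt ℝ (fun y' => gradient (fun x' => k x' y') x) y := by
    have e : (fun y' => gradient (fun x' => k x' y') x)
        = fun y' => (toDual ℝ (EuclideanSpace ℝ (Fin d))).symm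
            (((ContinuousLinearMap.compL ℝ (EuclideanSpace ℝ (Fin d))
                (EuclideanSpace ℝ (Fin d) × EuclideanSpace ℝ (Fin d)) ℝ).flip
              (ContinuousLinearMap.inl ℝ _ _))
              (fderiv ℝ (fun q : EuclideanSpace ℝ (Fin d) × EuclideanSpace ℝ (Fin d) => k q.1 q.2)
                (x, y'))) := by
      funext y'
      rw [grad_eq, hslice y']
      simp [ContinuousLinearMap.flip_apply, ContinuousLinearMap.compL_apply]
    rw [e]
    have h2 : Differentiable ℝ (fun y' => fderiv ℝ
        (fun q : EuclideanSpace ℝ (Fin d) × EuclideanSpace ℝ (Fin d) => k q.1 q.2) (x, y')) :=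
      ((hk.fderiv_right (by norm_num)).differentiable one_ne_zero).comp
        ((differentiable_const x).prodMk differentiable_id)
    exact ((toDual ℝ (EuclideanSpace ℝ (Fin d))).symm.differentiable.comp
      ((((ContinuousLinearMap.compL ℝ (EuclideanSpace ℝ (Fin d))
          (EuclideanSpace ℝ (Fin d) × EuclideanSpace ℝ (Fin d)) ℝ).flip
          (ContinuousLinearMap.inl ℝ _ _)).differentiable).comp h2)).differentiableAt
  -- the x-gradient field of ktilde
  have hGfun : (fun y' => gradient (fun x' => ktilde x' y') x)
      = fun y' => (w y' * k x y') • gradient w x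
          + (w x * w y') • gradient (fun x' => k x' y') x := by
    funext y'
    have e : (fun x' => ktilde x' y') = fun x' => w x' * (w y' * k x' y') := by
      funext x'; simp only [hktilde]; ring
    rw [e, gradient_mul' (hwd x) (((hk_x y') x).const_mul (w y')),
        gradient_const_mul' (w y') ((hk_x y') x), smul_smul, add_comm]
  have hdiffA : DifferentiableAt ℝ (fun y' => w y' * k x y') y := (hwd y).mul ((hk_y x) y)
  have hdiffB : DifferentiableAt ℝ (fun y' => w x * w y') y := (hwd y).const_mul (w x)
  -- term C : the mixed trace
  have hC : mixedTrace ktilde x y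
      = ⟪w y • gradient (fun y' => k x y') y + k x y • gradient w y, gradient w x⟫_ℝ
        + ((w x * w y) * mixedTrace k x y
          + w x * ⟪gradient w y, gradient (fun x' => k x' y) x⟫_ℝ) := by
    unfold mixedTrace
    rw [hGfun, fderiv_fun_add (hdiffA.smul_const (gradient w x)) (hdiffB.fun_smul hgdiff),
        fderiv_smul_const hdiffA (gradient w x), fderiv_fun_smul hdiffB hgdiff]
    simp only [ContinuousLinearMap.coe_add, ContinuousLinearMap.coe_smul, map_add, map_smul,
      smul_eq_mul]
    rw [trace_smulRight', trace_smulRight']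
    rw [← inner_grad (fun y' => w y' * k x y') y (gradient w x),
        gradient_mul' (hwd y) ((hk_y x) y)]
    rw [fderiv_const_mul (hwd y) (w x), ContinuousLinearMap.smul_apply, smul_eq_mul,
        ← inner_grad w y]
    try ring
  -- assemble
  unfold kappa
  rw [hA, hB, hC, hlp x, hlp y, hlρ x, hlρ y, hgw x, hgw y]
  simp only [hktilde]
  set Gpx := gradient p x
  set Gpy := gradient p y
  set Gρx := gradient ρ x
  set Gρy := gradient ρ y
  set gkx := gradient (fun x' => k x' y) x
  set gky := gradient (fun y' => k x y') y
  simp only [smul_sub, smul_smul, inner_add_left, inner_add_right, inner_sub_left,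
    inner_sub_right, real_inner_smul_left, real_inner_smul_right]
  simp only [real_inner_comm gky, real_inner_comm Gρy, real_inner_comm Gpy]
  try ring
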